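/- arXiv:2002.09930 — 2 statements merged into one kernel-verified Lean document; each statement's English description precedes it below -/
import Mathlib

section
/- Let p be an (n+1)×(n+1) Hermitian arrowhead matrix with (1,1)-entry c ∈ ℝ, first column below the diagonal given by z = (z_1,…,z_n) ∈ ℂⁿ, first row right of the diagonal given by the conjugates of z, and remaining block the real diagonal matrix diag(μ_1,…,μ_n). Then the characteristic polynomial of p equals (x−c)·∏_{i=1}^n (x−μ_i) − Σ_{i=1}^n |z_i|² · ∏_{j≠i} (x−μ_j). -/
open Matrix Polynomial BigOperators Finset

variable {R : Type*} [CommRing R]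

/-- Product over `univ.erase i.castSucc` splits off the last factor. -/
lemma erase_prod {n : ℕ} (d : Fin (n+1) → R) (i : Fin n) :
    ∏ j ∈ Finset.univ.erase i.castSucc, d j
      = d (Fin.last n) * ∏ j ∈ Finset.univ.erase i, d j.castSucc := by
  have h1 : ∏ j : Fin (n+1), Function.update d i.castSucc 1 j
      = 1 * ∏ j ∈ Finset.univ \ {i.castSucc}, d j :=
    Finset.prod_update_of_mem (Finset.mem_univ _) _ _
  have h2 : ∏ j : Fin n, Function.update (fun k : Fin n => d k.castSucc) i 1 j
      = 1 * ∏ j ∈ Finset.univ \ {i}, d j.castSucc :=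
    Finset.prod_update_of_mem (Finset.mem_univ _) _ _
  rw [one_mul, ← Finset.erase_eq] at h1
  rw [one_mul, ← Finset.erase_eq] at h2
  rw [← h1, ← h2, Fin.prod_univ_castSucc]
  rw [Function.update_of_ne (Fin.castSucc_lt_last i).ne' 1 d]
  have h3 : ∀ k : Fin n, Function.update d i.castSucc 1 k.castSucc
      = Function.update (fun k : Fin n => d k.castSucc) i 1 k := by
    intro k
    by_cases hk : k = i
    · subst hk; simp
    · rw [Function.update_of_ne (by simpa using hk), Function.update_of_ne hk]
  rw [Finset.prod_congr rfl fun k _ => h3 k, mul_comm]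

/-- Determinant of a matrix whose first row is `u` and whose row `i+1` has a single
entry `e i` in column `i.castSucc`. -/
lemma det_aux {n : ℕ} (u : Fin (n+1) → R) (e : Fin n → R) :
    (Matrix.of (Fin.cases (motive := fun _ => Fin (n+1) → R) u
      (fun i j => if Fin.castSucc i = j then e i else 0))).det
      = (-1)^n * u (Fin.last n) * ∏ i, e i := by
  set M : Matrix (Fin (n+1)) (Fin (n+1)) R := Matrix.of (Fin.cases u
      (fun i j => if Fin.castSucc i = j then e i else 0)) with hM
  rw [Matrix.det_succ_column M (Fin.last n), Fin.sum_univ_succ]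
  have hzero : ∀ i : Fin n,
      (-1 : R)^((i.succ : ℕ) + (Fin.last n : ℕ)) * M i.succ (Fin.last n) *
        (M.submatrix i.succ.succAbove (Fin.last n).succAbove).det = 0 := by
    intro i
    have : M i.succ (Fin.last n) = 0 := by
      simp only [hM, Matrix.of_apply, Fin.cases_succ]
      exact if_neg (Fin.castSucc_lt_last i).ne
    rw [this, mul_zero, zero_mul]
  rw [Finset.sum_eq_zero (fun i _ => hzero i), add_zero]
  have h0 : M 0 (Fin.last n) = u (Fin.last n) := by simp [hM]
  have hsub : M.submatrix (0 : Fin (n+1)).succAbove (Fin.last n).succAbove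
      = Matrix.diagonal e := by
    ext i j
    simp only [Matrix.submatrix_apply, Fin.succAbove_zero, Fin.succAbove_last, hM,
      Matrix.of_apply, Fin.cases_succ, Matrix.diagonal_apply]
    simp [Fin.castSucc_inj]
  rw [h0, hsub, Matrix.det_diagonal]
  simp [mul_comm]

lemma neg_one_pow_aux (n : ℕ) : ((-1 : R)^(n+1)) * (-1 : R)^n = -1 := by
  rw [← pow_add, show n+1+n = 2*n+1 by ring, pow_succ, pow_mul]
  norm_num

/-- A general "arrowhead" matrix over a commutative ring. -/
def arrowMat {n : ℕ} (a : R) (u v d : Fin n → R) : Matrix (Fin (n+1)) (Fin (n+1)) R :=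
  Matrix.of (Fin.cases (motive := fun _ => Fin (n+1) → R)
    (Fin.cons a u)
    (fun i => Fin.cons (v i) (fun j => if i = j then d i else 0)))

lemma det_arrowMat {n : ℕ} (a : R) (u v d : Fin n → R) :
    (arrowMat a u v d).det
      = a * ∏ i, d i - ∑ i, v i * u i * ∏ j ∈ Finset.univ.erase i, d j := by
  induction n with
  | zero =>
    simp [arrowMat, Matrix.det_fin_one]
  | succ n ih =>
    set M : Matrix (Fin (n+2)) (Fin (n+2)) R := arrowMat a u v d with hM
    have hlast : (Fin.last (n+1)) = (Fin.last n).succ := rfl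
    have hrow : ∀ j : Fin (n+1), M (Fin.last (n+1)) j.succ
        = if Fin.last n = j then d (Fin.last n) else 0 := by
      intro j; rw [hlast]
      show (arrowMat a u v d) ((Fin.last n).succ) j.succ = _
      simp only [arrowMat, Matrix.of_apply, Fin.cases_succ, Fin.cons_succ]
    rw [Matrix.det_succ_row M (Fin.last (n+1)), Fin.sum_univ_succ]
    -- the sum over j.succ has a single nonzero term at j = last n
    have hsum : ∑ j : Fin (n+1),
        (-1 : R)^((Fin.last (n+1) : ℕ) + (j.succ : ℕ)) * M (Fin.last (n+1)) j.succ *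
          (M.submatrix (Fin.last (n+1)).succAbove j.succ.succAbove).det
        = d (Fin.last n) *
          (M.submatrix (Fin.last (n+1)).succAbove (Fin.last n).succ.succAbove).det := by
      rw [Finset.sum_eq_single (Fin.last n)]
      · rw [hrow, if_pos rfl]
        have h2 : ((Fin.last (n+1) : ℕ) + ((Fin.last n).succ : ℕ)) = 2*(n+1) := by
          simp [Fin.val_last]; ring
        rw [h2, pow_mul]; norm_num
      · intro j _ hj
        rw [hrow, if_neg (Ne.symm hj), mul_zero, zero_mul]
      · simp
    rw [hsum]
    -- the two submatrices
    have hsub1 : M.submatrix (Fin.last (n+1)).succAbove (Fin.last n).succ.succAbove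
        = arrowMat a (fun i => u i.castSucc) (fun i => v i.castSucc) (fun i => d i.castSucc) := by
      rw [← hlast, Fin.succAbove_last]
      ext i j
      refine Fin.cases ?_ (fun i' => ?_) i <;> refine Fin.cases ?_ (fun j' => ?_) j <;>
        simp only [Matrix.submatrix_apply, hM, arrowMat, Matrix.of_apply, Fin.castSucc_zero,
          ← Fin.succ_castSucc, Fin.cases_zero, Fin.cases_succ, Fin.cons_zero, Fin.cons_succ,
          Fin.castSucc_inj]
    have hsub0 : M.submatrix (Fin.last (n+1)).succAbove (0 : Fin (n+2)).succAbove
        = Matrix.of (Fin.cases (motive := fun _ => Fin (n+1) → R) u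
            (fun i j => if Fin.castSucc i = j then d i.castSucc else 0)) := by
      rw [Fin.succAbove_last, Fin.succAbove_zero]
      ext i j
      refine Fin.cases ?_ (fun i' => ?_) i <;>
        simp only [Matrix.submatrix_apply, hM, arrowMat, Matrix.of_apply, Fin.castSucc_zero,
          ← Fin.succ_castSucc, Fin.cases_zero, Fin.cases_succ, Fin.cons_zero, Fin.cons_succ,
          Fin.castSucc_inj]
    have h00 : M (Fin.last (n+1)) 0 = v (Fin.last n) := by
      rw [hlast]
      show (arrowMat a u v d) ((Fin.last n).succ) 0 = _
      simp only [arrowMat, Matrix.of_apply, Fin.cases_succ, Fin.cons_zero]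
    rw [hsub1, hsub0, ih, det_aux, h00]
    have herase : ∀ i : Fin n, ∏ j ∈ Finset.univ.erase i.castSucc, d j
        = d (Fin.last n) * ∏ j ∈ Finset.univ.erase i, d j.castSucc := fun i => erase_prod d i
    have hlasterase : ∏ j ∈ Finset.univ.erase (Fin.last n), d j
        = ∏ j : Fin n, d j.castSucc := by
      have h := Finset.prod_update_of_mem (Finset.mem_univ (Fin.last n)) d 1
      rw [← Finset.erase_eq, one_mul] at h
      rw [← h, Fin.prod_univ_castSucc, Function.update_self, mul_one]
      exact Finset.prod_congr rfl fun k _ => by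
        rw [Function.update_of_ne (Fin.castSucc_lt_last k).ne]
    rw [Fin.prod_univ_castSucc d, Fin.sum_univ_castSucc
      (f := fun i => v i * u i * ∏ j ∈ Finset.univ.erase i, d j), hlasterase]
    have hsum2 : ∑ i : Fin n, v i.castSucc * u i.castSucc *
          ∏ j ∈ Finset.univ.erase i.castSucc, d j
        = d (Fin.last n) * ∑ i : Fin n, v i.castSucc * u i.castSucc *
            ∏ j ∈ Finset.univ.erase i, d j.castSucc := by
      rw [Finset.mul_sum]
      exact Finset.sum_congr rfl fun i _ => by rw [herase i]; ring
    rw [hsum2]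
    have hv : ((Fin.last (n+1) : ℕ) + ((0 : Fin (n+2)) : ℕ)) = n + 1 := by
      simp [Fin.val_last]
    rw [hv]
    linear_combination (v (Fin.last n) * u (Fin.last n) * ∏ i : Fin n, d i.castSucc) *
      neg_one_pow_aux (R := R) n

/-- The Hermitian arrowhead matrix with (1,1)-entry `c`, border `z`, and
diagonal block `diag (mu 1, …, mu n)`. -/
noncomputable def arrowhead (n : ℕ) (c : ℝ) (mu : Fin n → ℝ) (z : Fin n → ℂ) :
    Matrix (Fin (n+1)) (Fin (n+1)) ℂ :=
  Matrix.of (Fin.cases (motive := fun _ => Fin (n+1) → ℂ)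
    (Fin.cons (c : ℂ) (fun j => (starRingEnd ℂ) (z j)))
    (fun i => Fin.cons (z i) (fun j => if i = j then (mu i : ℂ) else 0)))

theorem stmt0 (n : ℕ) (c : ℝ) (mu : Fin n → ℝ) (z : Fin n → ℂ) :
    (arrowhead n c mu z).charpoly =
      (X - C (c : ℂ)) * ∏ i, (X - C (mu i : ℂ)) -
        ∑ i, C ((‖z i‖ : ℂ)^2) * ∏ j ∈ Finset.univ.erase i, (X - C (mu j : ℂ)) := by
  have hcm : Matrix.charmatrix (arrowhead n c mu z)
      = arrowMat (X - C (c : ℂ)) (fun j => -C ((starRingEnd ℂ) (z j)))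
          (fun i => -C (z i)) (fun i => X - C ((mu i : ℂ))) := by
    ext i j
    refine Fin.cases ?_ (fun i' => ?_) i <;> refine Fin.cases ?_ (fun j' => ?_) j
    · rw [Matrix.charmatrix_apply_eq]
      simp [arrowhead, arrowMat]
    · rw [Matrix.charmatrix_apply_ne _ _ _ (Fin.succ_ne_zero j').symm]
      simp [arrowhead, arrowMat]
    · rw [Matrix.charmatrix_apply_ne _ _ _ (Fin.succ_ne_zero i')]
      simp [arrowhead, arrowMat]
    · by_cases h : i' = j'
      · subst h
        rw [Matrix.charmatrix_apply_eq]
        simp [arrowhead, arrowMat]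
      · rw [Matrix.charmatrix_apply_ne _ _ _ (by simpa using h)]
        simp [arrowhead, arrowMat, h]
  rw [Matrix.charpoly, hcm, det_arrowMat]
  congr 1
  refine Finset.sum_congr rfl fun i _ => ?_
  rw [show (-C (z i)) * (-C ((starRingEnd ℂ) (z i))) = C (z i * (starRingEnd ℂ) (z i)) by
    rw [_root_.map_mul]; ring]
  congr 2
  rw [Complex.mul_conj]
  rw [show ((‖z i‖ : ℂ))^2 = ((‖z i‖^2 : ℝ) : ℂ) by push_cast; ring]
  exact congrArg Complex.ofReal (by rw [Complex.normSq_eq_norm_sq])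
end

section
/- Let M = diag(μ_1,…,μ_n) be real diagonal, x, z ∈ ℂⁿ, and X an n×n skew-Hermitian matrix with x z† + z x† + [X,M] = 0. Let μ be a value among the μ_i, with P_μ the projection onto the μ-eigenspace of M, and assume P_μ z = 0. Then P_μ (X z) = (Σ_{ν ≠ μ} ‖P_ν z‖²/(μ−ν)) · P_μ x, where the sum runs over the distinct values ν of (μ_1,…,μ_n) other than μ. -/
open Matrix BigOperators

theorem stmt6 (n : ℕ) (mu : Fin n → ℝ) (x z : Fin n → ℂ)
    (X : Matrix (Fin n) (Fin n) ℂ) (hX : Xᴴ = -X)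
    (M : Matrix (Fin n) (Fin n) ℂ) (hM : M = Matrix.diagonal (fun i => (mu i : ℂ)))
    (P : ℝ → Matrix (Fin n) (Fin n) ℂ)
    (hP : ∀ ν : ℝ, P ν = Matrix.diagonal (fun i => if mu i = ν then (1 : ℂ) else 0))
    (hcond : vecMulVec x (star z) + vecMulVec z (star x) + (X * M - M * X) = 0)
    (μ0 : ℝ) (hμ0 : μ0 ∈ Set.range mu) (hz : P μ0 *ᵥ z = 0) :
    P μ0 *ᵥ (X *ᵥ z) =
      ((((∑ ν ∈ (Finset.univ.image mu).erase μ0,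
          (∑ i, Complex.normSq ((P ν *ᵥ z) i)) / (μ0 - ν)) : ℝ) : ℂ)) • (P μ0 *ᵥ x) := by
  subst hM
  have hz' : ∀ i, mu i = μ0 → z i = 0 := by
    intro i hi
    have := congrFun hz i
    simpa [hP, Matrix.mulVec_diagonal, hi] using this
  have hcd : ∀ i j, x i * (starRingEnd ℂ) (z j) + z i * (starRingEnd ℂ) (x j)
      + (X i j * (mu j : ℂ) - (mu i : ℂ) * X i j) = 0 := by
    intro i j
    have := congrFun (congrFun hcond i) j
    simpa [Matrix.vecMulVec_apply, Matrix.mul_diagonal, Matrix.diagonal_mul,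
      Matrix.sub_apply, Matrix.add_apply] using this
  -- rewrite the real coefficient
  have hc : (∑ ν ∈ (Finset.univ.image mu).erase μ0,
        (∑ i, Complex.normSq ((P ν *ᵥ z) i)) / (μ0 - ν))
      = ∑ j, (if mu j = μ0 then 0 else Complex.normSq (z j) / (μ0 - mu j)) := by
    have h1 : ∀ ν j, Complex.normSq ((P ν *ᵥ z) j)
        = if mu j = ν then Complex.normSq (z j) else 0 := by
      intro ν j
      simp [hP, Matrix.mulVec_diagonal]
      split <;> simp
    calc (∑ ν ∈ (Finset.univ.image mu).erase μ0,
            (∑ j, Complex.normSq ((P ν *ᵥ z) j)) / (μ0 - ν))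
        = ∑ ν ∈ (Finset.univ.image mu).erase μ0,
            ∑ j, (if mu j = ν then Complex.normSq (z j) / (μ0 - ν) else 0) := by
          refine Finset.sum_congr rfl fun ν _ => ?_
          rw [Finset.sum_div]
          refine Finset.sum_congr rfl fun j _ => ?_
          rw [h1]
          split <;> simp
      _ = ∑ j, ∑ ν ∈ (Finset.univ.image mu).erase μ0,
            (if mu j = ν then Complex.normSq (z j) / (μ0 - ν) else 0) := by
          rw [Finset.sum_comm]
      _ = ∑ j, (if mu j = μ0 then 0 else Complex.normSq (z j) / (μ0 - mu j)) := by
          refine Finset.sum_congr rfl fun j _ => ?_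
          rw [Finset.sum_ite_eq]
          by_cases hj : mu j = μ0
          · simp [hj]
          · have : mu j ∈ (Finset.univ.image mu).erase μ0 := by
              exact Finset.mem_erase.2 ⟨hj, Finset.mem_image_of_mem mu (Finset.mem_univ j)⟩
            simp [this, hj]
  rw [hc]
  funext i
  simp only [Pi.smul_apply, smul_eq_mul]
  rw [show (P μ0 *ᵥ (X *ᵥ z)) i = (if mu i = μ0 then (X *ᵥ z) i else 0) by
    simp [hP, Matrix.mulVec_diagonal],
    show (P μ0 *ᵥ x) i = (if mu i = μ0 then x i else 0) by
    simp [hP, Matrix.mulVec_diagonal]]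
  by_cases hi : mu i = μ0
  · simp only [hi, if_pos rfl, if_true]
    have hzi : z i = 0 := hz' i hi
    have key : ∀ j, X i j * z j
        = x i * ((Complex.normSq (z j) : ℂ) / ((μ0 : ℂ) - (mu j : ℂ))) * (if mu j = μ0 then 0 else 1) := by
      intro j
      by_cases hj : mu j = μ0
      · simp [hj, hz' j hj]
      · have h := hcd i j
        rw [hzi, hi] at h
        have hne : (μ0 : ℂ) - (mu j : ℂ) ≠ 0 := by
          rw [sub_ne_zero]
          exact_mod_cast fun h' => hj ((Complex.ofReal_inj.1 h').symm)
        have hns : ((Complex.normSq (z j) : ℂ)) = (starRingEnd ℂ) (z j) * z j := by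
          rw [Complex.normSq_eq_conj_mul_self]
        rw [if_neg hj]
        field_simp
        rw [hns]
        linear_combination (-(z j)) * h
    have : (X *ᵥ z) i = ∑ j, X i j * z j := by simp [Matrix.mulVec, dotProduct]
    rw [this]
    push_cast
    rw [Finset.sum_mul]
    refine Finset.sum_congr rfl fun j _ => ?_
    rw [key j]
    by_cases hj : mu j = μ0 <;> simp [hj] <;> push_cast <;> ring
  · simp [hi]
end
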